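/- arXiv:1708.04934 — 5 statements merged into one kernel-verified Lean document; each statement's English description precedes it below -/
import Mathlib

section
/- Let G be a real 4×4 symmetric invertible matrix and F a real 4×4 antisymmetric matrix. Then det(G + F) = det G · (1 − (1/2)·tr((G⁻¹F)²)) + det F. -/
open Matrix

lemma my_det_fin_four (A : Matrix (Fin 4) (Fin 4) ℝ) :
    A.det =
      A 0 0 * (A 1 1 * A 2 2 * A 3 3 - A 1 1 * A 2 3 * A 3 2
        - A 1 2 * A 2 1 * A 3 3 + A 1 2 * A 2 3 * A 3 1
        + A 1 3 * A 2 1 * A 3 2 - A 1 3 * A 2 2 * A 3 1)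
      - A 0 1 * (A 1 0 * A 2 2 * A 3 3 - A 1 0 * A 2 3 * A 3 2
        - A 1 2 * A 2 0 * A 3 3 + A 1 2 * A 2 3 * A 3 0
        + A 1 3 * A 2 0 * A 3 2 - A 1 3 * A 2 2 * A 3 0)
      + A 0 2 * (A 1 0 * A 2 1 * A 3 3 - A 1 0 * A 2 3 * A 3 1
        - A 1 1 * A 2 0 * A 3 3 + A 1 1 * A 2 3 * A 3 0
        + A 1 3 * A 2 0 * A 3 1 - A 1 3 * A 2 1 * A 3 0)
      - A 0 3 * (A 1 0 * A 2 1 * A 3 2 - A 1 0 * A 2 2 * A 3 1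
        - A 1 1 * A 2 0 * A 3 2 + A 1 1 * A 2 2 * A 3 0
        + A 1 2 * A 2 0 * A 3 1 - A 1 2 * A 2 1 * A 3 0) := by
  rw [Matrix.det_succ_row_zero, Fin.sum_univ_four]
  simp [Matrix.det_fin_three, Matrix.submatrix_apply, Fin.succAbove, Fin.lt_def,
    show (Fin.succ 2 : Fin 4) = 3 from rfl, show ((3:Fin 4):ℕ) = 3 from rfl,
    show (Fin.castSucc 2 : Fin 4) = 2 from rfl, show (Fin.castSucc 1 : Fin 4) = 1 from rfl,
    show (Fin.castSucc 0 : Fin 4) = 0 from rfl]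
  ring

set_option maxHeartbeats 4000000 in
lemma det_one_add_fin_four (M : Matrix (Fin 4) (Fin 4) ℝ) :
    (1 + M).det = 1 + M.trace + (M.trace ^ 2 - (M ^ 2).trace) / 2
      + (M.trace ^ 3 - 3 * M.trace * (M ^ 2).trace + 2 * (M ^ 3).trace) / 6 + M.det := by
  rw [my_det_fin_four, my_det_fin_four M]
  simp (config := { decide := true }) only [Matrix.trace, Matrix.diag, Fin.sum_univ_four,
    pow_succ, pow_zero, one_mul, Matrix.mul_apply, Matrix.add_apply, Matrix.one_apply,
    Fin.isValue, if_true, if_false]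
  norm_num
  ring

lemma shift_pow (F Gi : Matrix (Fin 4) (Fin 4) ℝ) (n : ℕ) :
    (F * Gi) ^ (n + 1) = F * ((Gi * F) ^ n * Gi) := by
  induction n with
  | zero => simp
  | succ m ih =>
    rw [pow_succ, ih, pow_succ]
    simp only [Matrix.mul_assoc]

/-- Born–Infeld determinant expansion, algebraic core (eq. (14)): for a real
4×4 symmetric invertible matrix `G` and antisymmetric matrix `F`,
`det (G + F) = det G · (1 − ½ tr((G⁻¹F)²)) + det F`. -/
theorem det_add_of_symm_antisymm
    (G F : Matrix (Fin 4) (Fin 4) ℝ)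
    (hGsymm : Gᵀ = G) (hGinv : IsUnit G.det) (hFanti : Fᵀ = -F) :
    (G + F).det = G.det * (1 - (1 / 2) * ((G⁻¹ * F) ^ 2).trace) + F.det := by
  set M := G⁻¹ * F with hM
  have hne : G.det ≠ 0 := hGinv.ne_zero
  have hGG : G * G⁻¹ = 1 := Matrix.mul_nonsing_inv G hGinv
  have hGiT : G⁻¹ᵀ = G⁻¹ := by rw [Matrix.transpose_nonsing_inv, hGsymm]
  have hMT : Mᵀ = -(F * G⁻¹) := by
    rw [hM, Matrix.transpose_mul, hGiT, hFanti, Matrix.neg_mul]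
  have key : ∀ k : ℕ, Odd k → (M ^ k).trace = 0 := by
    intro k hk
    have h1 : (M ^ k).trace = ((M ^ k)ᵀ).trace := (Matrix.trace_transpose _).symm
    have h2 : ((M ^ k)ᵀ) = (Mᵀ) ^ k := Matrix.transpose_pow M k
    have h3 : ((-(F * G⁻¹)) ^ k) = -((F * G⁻¹) ^ k) := hk.neg_pow _
    have h4 : ((F * G⁻¹) ^ k).trace = (M ^ k).trace := by
      obtain ⟨n, rfl⟩ := hk
      rw [shift_pow, Matrix.trace_mul_comm, Matrix.mul_assoc, ← pow_succ, hM]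
    have hfin : (M ^ k).trace = -((M ^ k).trace) := by
      conv_lhs => rw [h1, h2, hMT]
      rw [h3, Matrix.trace_neg, h4]
    linarith
  have ht1 : M.trace = 0 := by
    have := key 1 ⟨0, rfl⟩
    simpa using this
  have ht3 : (M ^ 3).trace = 0 := key 3 ⟨1, rfl⟩
  have hGMF : G + F = G * (1 + M) := by
    rw [Matrix.mul_add, mul_one, hM, ← Matrix.mul_assoc, hGG, Matrix.one_mul]
  have hdetM : G.det * M.det = F.det := by
    rw [hM, Matrix.det_mul, Matrix.det_nonsing_inv, Ring.inverse_eq_inv]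
    field_simp
  rw [hGMF, Matrix.det_mul, det_one_add_fin_four, ht1, ht3]
  ring_nf
  linarith [hdetM]
end

section
/- Let G be a real 4×4 symmetric matrix with det G < 0 and let F be a real 4×4 antisymmetric matrix. Denote by G^{μν} the entries of G⁻¹, define F^{μν} := ∑_{α,β} G^{μα}G^{νβ}F_{αβ} and F̃^{μν} := (1/(2√(−det G))) ∑_{ρ,σ} ε^{μνρσ} F_{ρσ}, where ε^{μνρσ} is the totally antisymmetric symbol with ε^{0123} = 1. Then det(G + F) = det G · ( 1 + (1/2) ∑_{μ,ν} F_{μν}F^{μν} − (1/16) ( ∑_{μ,ν} F_{μν}F̃^{μν} )² ). -/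
open Matrix

set_option maxHeartbeats 4000000

/-- The totally antisymmetric Levi-Civita symbol on `Fin 4` with `ε₀₁₂₃ = 1`:
it equals the sign of the permutation `(μ,ν,ρ,σ)` of `(0,1,2,3)` and `0` if two
indices coincide (Vandermonde-product formula). -/
noncomputable def eps4 (μ ν ρ σ : Fin 4) : ℝ :=
  (((ν : ℝ) - μ) * ((ρ : ℝ) - μ) * ((σ : ℝ) - μ) *
    ((ρ : ℝ) - ν) * ((σ : ℝ) - ν) * ((σ : ℝ) - ρ)) / 12

private theorem det_fin_four' (A : Matrix (Fin 4) (Fin 4) ℝ) : A.det =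
    A 0 0 * A 1 1 * A 2 2 * A 3 3 - A 0 0 * A 1 1 * A 2 3 * A 3 2 - A 0 0 * A 1 2 * A 2 1 * A 3 3 + A 0 0 * A 1 2 * A 2 3 * A 3 1 + A 0 0 * A 1 3 * A 2 1 * A 3 2 - A 0 0 * A 1 3 * A 2 2 * A 3 1 - A 0 1 * A 1 0 * A 2 2 * A 3 3 + A 0 1 * A 1 0 * A 2 3 * A 3 2 + A 0 1 * A 1 2 * A 2 0 * A 3 3 - A 0 1 * A 1 2 * A 2 3 * A 3 0 - A 0 1 * A 1 3 * A 2 0 * A 3 2 + A 0 1 * A 1 3 * A 2 2 * A 3 0 + A 0 2 * A 1 0 * A 2 1 * A 3 3 - A 0 2 * A 1 0 * A 2 3 * A 3 1 - A 0 2 * A 1 1 * A 2 0 * A 3 3 + A 0 2 * A 1 1 * A 2 3 * A 3 0 + A 0 2 * A 1 3 * A 2 0 * A 3 1 - A 0 2 * A 1 3 * A 2 1 * A 3 0 - A 0 3 * A 1 0 * A 2 1 * A 3 2 + A 0 3 * A 1 0 * A 2 2 * A 3 1 + A 0 3 * A 1 1 * A 2 0 * A 3 2 - A 0 3 * A 1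 1 * A 2 2 * A 3 0 - A 0 3 * A 1 2 * A 2 0 * A 3 1 + A 0 3 * A 1 2 * A 2 1 * A 3 0 := by
  rw [Matrix.det_succ_row_zero]
  simp only [Fin.sum_univ_four, Matrix.det_fin_three, Matrix.submatrix_apply]
  simp (config := { decide := true }) only [Fin.succAbove, Fin.lt_def,
    Matrix.submatrix_apply, if_true, if_false,
    show ((0:Fin 3).succ : Fin 4) = 1 from rfl,
    show ((1:Fin 3).succ : Fin 4) = 2 from rfl,
    show ((2:Fin 3).succ : Fin 4) = 3 from rfl,
    show (Fin.castSucc (0:Fin 3) : Fin 4) = 0 from rfl,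
    show (Fin.castSucc (1:Fin 3) : Fin 4) = 1 from rfl,
    show (Fin.castSucc (2:Fin 3) : Fin 4) = 2 from rfl,
    show ((0:Fin 4):ℕ) = 0 from rfl, show ((1:Fin 4):ℕ) = 1 from rfl,
    show ((2:Fin 4):ℕ) = 2 from rfl, show ((3:Fin 4):ℕ) = 3 from rfl]
  norm_num
  try ring

/-- Equation (14) of the paper: the exact Born–Infeld expansion of
`det (G + F)` for a Lorentzian-signature symmetric `G` (`det G < 0`) and an
antisymmetric `F` in four dimensions, through the invariants `F_{μν}F^{μν}`
and `F_{μν}F̃^{μν}`, where indices are raised with `G⁻¹` and `F̃` is the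
metric dual of `F`. -/
theorem born_infeld_det_expansion
    (G F : Matrix (Fin 4) (Fin 4) ℝ)
    (hGsymm : Gᵀ = G) (hGdet : G.det < 0) (hFanti : Fᵀ = -F)
    (Fup : Matrix (Fin 4) (Fin 4) ℝ)
    (hFup : ∀ μ ν, Fup μ ν = ∑ α, ∑ β, G⁻¹ μ α * G⁻¹ ν β * F α β)
    (Ftil : Matrix (Fin 4) (Fin 4) ℝ)
    (hFtil : ∀ μ ν, Ftil μ ν =
      (1 / (2 * Real.sqrt (-G.det))) * ∑ ρ, ∑ σ, eps4 μ ν ρ σ * F ρ σ) :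
    (G + F).det = G.det *
      (1 + (1 / 2) * (∑ μ, ∑ ν, F μ ν * Fup μ ν)
        - (1 / 16) * (∑ μ, ∑ ν, F μ ν * Ftil μ ν) ^ 2) := by
  have hd : G.det ≠ 0 := ne_of_lt hGdet
  have hdpos : (0:ℝ) < -G.det := by linarith
  have hs2 : Real.sqrt (-G.det) ^ 2 = -G.det := Real.sq_sqrt hdpos.le
  -- antisymmetry of F, entrywise
  have hF : ∀ i j, F j i = - F i j := fun i j => by
    have := congrFun (congrFun hFanti i) j
    simpa [Matrix.transpose_apply] using this
  have f00 : F 0 0 = 0 := by have := hF 0 0; linarith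
  have f11 : F 1 1 = 0 := by have := hF 1 1; linarith
  have f22 : F 2 2 = 0 := by have := hF 2 2; linarith
  have f33 : F 3 3 = 0 := by have := hF 3 3; linarith
  have f10 : F 1 0 = - F 0 1 := hF 0 1
  have f20 : F 2 0 = - F 0 2 := hF 0 2
  have f30 : F 3 0 = - F 0 3 := hF 0 3
  have f21 : F 2 1 = - F 1 2 := hF 1 2
  have f31 : F 3 1 = - F 1 3 := hF 1 3
  have f32 : F 3 2 = - F 2 3 := hF 2 3
  -- symmetry of G, entrywise
  have hG : ∀ i j, G j i = G i j := fun i j => by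
    have := congrFun (congrFun hGsymm i) j
    simpa [Matrix.transpose_apply] using this
  have g10 : G 1 0 = G 0 1 := hG 0 1
  have g20 : G 2 0 = G 0 2 := hG 0 2
  have g30 : G 3 0 = G 0 3 := hG 0 3
  have g21 : G 2 1 = G 1 2 := hG 1 2
  have g31 : G 3 1 = G 1 3 := hG 1 3
  have g32 : G 3 2 = G 2 3 := hG 2 3
  -- inverse entrywise through the adjugate
  have hinv : ∀ i j, G⁻¹ i j = (G.det)⁻¹ * G.adjugate i j := fun i j => by
    rw [Matrix.inv_def, Matrix.smul_apply, Ring.inverse_eq_inv', smul_eq_mul]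
  -- explicit adjugate entries
  have a00 : G.adjugate 0 0 = (G 1 1 * G 2 2 * G 3 3 - G 1 1 * G 2 3 * G 3 2 - G 1 2 * G 2 1 * G 3 3 + G 1 2 * G 2 3 * G 3 1 + G 1 3 * G 2 1 * G 3 2 - G 1 3 * G 2 2 * G 3 1) := by
    rw [Matrix.adjugate_fin_succ_eq_det_submatrix, Matrix.det_fin_three]
    simp (config := { decide := true }) only [Fin.succAbove, Fin.lt_def,
      Matrix.submatrix_apply, if_true, if_false,
      show ((0:Fin 3).succ : Fin 4) = 1 from rfl,
      show ((1:Fin 3).succ : Fin 4) = 2 from rfl,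
      show ((2:Fin 3).succ : Fin 4) = 3 from rfl,
      show (Fin.castSucc (0:Fin 3) : Fin 4) = 0 from rfl,
      show (Fin.castSucc (1:Fin 3) : Fin 4) = 1 from rfl,
      show (Fin.castSucc (2:Fin 3) : Fin 4) = 2 from rfl,
      show ((0:Fin 4):ℕ) = 0 from rfl, show ((1:Fin 4):ℕ) = 1 from rfl,
      show ((2:Fin 4):ℕ) = 2 from rfl, show ((3:Fin 4):ℕ) = 3 from rfl]
    norm_num
    try ring
  have a01 : G.adjugate 0 1 = -(G 0 1 * G 2 2 * G 3 3 - G 0 1 * G 2 3 * G 3 2 - G 0 2 * G 2 1 * G 3 3 + G 0 2 * G 2 3 * G 3 1 + G 0 3 * G 2 1 * G 3 2 - G 0 3 * G 2 2 * G 3 1) := by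
    rw [Matrix.adjugate_fin_succ_eq_det_submatrix, Matrix.det_fin_three]
    simp (config := { decide := true }) only [Fin.succAbove, Fin.lt_def,
      Matrix.submatrix_apply, if_true, if_false,
      show ((0:Fin 3).succ : Fin 4) = 1 from rfl,
      show ((1:Fin 3).succ : Fin 4) = 2 from rfl,
      show ((2:Fin 3).succ : Fin 4) = 3 from rfl,
      show (Fin.castSucc (0:Fin 3) : Fin 4) = 0 from rfl,
      show (Fin.castSucc (1:Fin 3) : Fin 4) = 1 from rfl,
      show (Fin.castSucc (2:Fin 3) : Fin 4) = 2 from rfl,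
      show ((0:Fin 4):ℕ) = 0 from rfl, show ((1:Fin 4):ℕ) = 1 from rfl,
      show ((2:Fin 4):ℕ) = 2 from rfl, show ((3:Fin 4):ℕ) = 3 from rfl]
    norm_num
    try ring
  have a02 : G.adjugate 0 2 = (G 0 1 * G 1 2 * G 3 3 - G 0 1 * G 1 3 * G 3 2 - G 0 2 * G 1 1 * G 3 3 + G 0 2 * G 1 3 * G 3 1 + G 0 3 * G 1 1 * G 3 2 - G 0 3 * G 1 2 * G 3 1) := by
    rw [Matrix.adjugate_fin_succ_eq_det_submatrix, Matrix.det_fin_three]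
    simp (config := { decide := true }) only [Fin.succAbove, Fin.lt_def,
      Matrix.submatrix_apply, if_true, if_false,
      show ((0:Fin 3).succ : Fin 4) = 1 from rfl,
      show ((1:Fin 3).succ : Fin 4) = 2 from rfl,
      show ((2:Fin 3).succ : Fin 4) = 3 from rfl,
      show (Fin.castSucc (0:Fin 3) : Fin 4) = 0 from rfl,
      show (Fin.castSucc (1:Fin 3) : Fin 4) = 1 from rfl,
      show (Fin.castSucc (2:Fin 3) : Fin 4) = 2 from rfl,
      show ((0:Fin 4):ℕ) = 0 from rfl, show ((1:Fin 4):ℕ) = 1 from rfl,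
      show ((2:Fin 4):ℕ) = 2 from rfl, show ((3:Fin 4):ℕ) = 3 from rfl]
    norm_num
    try ring
  have a03 : G.adjugate 0 3 = -(G 0 1 * G 1 2 * G 2 3 - G 0 1 * G 1 3 * G 2 2 - G 0 2 * G 1 1 * G 2 3 + G 0 2 * G 1 3 * G 2 1 + G 0 3 * G 1 1 * G 2 2 - G 0 3 * G 1 2 * G 2 1) := by
    rw [Matrix.adjugate_fin_succ_eq_det_submatrix, Matrix.det_fin_three]
    simp (config := { decide := true }) only [Fin.succAbove, Fin.lt_def,
      Matrix.submatrix_apply, if_true, if_false,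
      show ((0:Fin 3).succ : Fin 4) = 1 from rfl,
      show ((1:Fin 3).succ : Fin 4) = 2 from rfl,
      show ((2:Fin 3).succ : Fin 4) = 3 from rfl,
      show (Fin.castSucc (0:Fin 3) : Fin 4) = 0 from rfl,
      show (Fin.castSucc (1:Fin 3) : Fin 4) = 1 from rfl,
      show (Fin.castSucc (2:Fin 3) : Fin 4) = 2 from rfl,
      show ((0:Fin 4):ℕ) = 0 from rfl, show ((1:Fin 4):ℕ) = 1 from rfl,
      show ((2:Fin 4):ℕ) = 2 from rfl, show ((3:Fin 4):ℕ) = 3 from rfl]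
    norm_num
    try ring
  have a10 : G.adjugate 1 0 = -(G 1 0 * G 2 2 * G 3 3 - G 1 0 * G 2 3 * G 3 2 - G 1 2 * G 2 0 * G 3 3 + G 1 2 * G 2 3 * G 3 0 + G 1 3 * G 2 0 * G 3 2 - G 1 3 * G 2 2 * G 3 0) := by
    rw [Matrix.adjugate_fin_succ_eq_det_submatrix, Matrix.det_fin_three]
    simp (config := { decide := true }) only [Fin.succAbove, Fin.lt_def,
      Matrix.submatrix_apply, if_true, if_false,
      show ((0:Fin 3).succ : Fin 4) = 1 from rfl,
      show ((1:Fin 3).succ : Fin 4) = 2 from rfl,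
      show ((2:Fin 3).succ : Fin 4) = 3 from rfl,
      show (Fin.castSucc (0:Fin 3) : Fin 4) = 0 from rfl,
      show (Fin.castSucc (1:Fin 3) : Fin 4) = 1 from rfl,
      show (Fin.castSucc (2:Fin 3) : Fin 4) = 2 from rfl,
      show ((0:Fin 4):ℕ) = 0 from rfl, show ((1:Fin 4):ℕ) = 1 from rfl,
      show ((2:Fin 4):ℕ) = 2 from rfl, show ((3:Fin 4):ℕ) = 3 from rfl]
    norm_num
    try ring
  have a11 : G.adjugate 1 1 = (G 0 0 * G 2 2 * G 3 3 - G 0 0 * G 2 3 * G 3 2 - G 0 2 * G 2 0 * G 3 3 + G 0 2 * G 2 3 * G 3 0 + G 0 3 * G 2 0 * G 3 2 - G 0 3 * G 2 2 * G 3 0) := by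
    rw [Matrix.adjugate_fin_succ_eq_det_submatrix, Matrix.det_fin_three]
    simp (config := { decide := true }) only [Fin.succAbove, Fin.lt_def,
      Matrix.submatrix_apply, if_true, if_false,
      show ((0:Fin 3).succ : Fin 4) = 1 from rfl,
      show ((1:Fin 3).succ : Fin 4) = 2 from rfl,
      show ((2:Fin 3).succ : Fin 4) = 3 from rfl,
      show (Fin.castSucc (0:Fin 3) : Fin 4) = 0 from rfl,
      show (Fin.castSucc (1:Fin 3) : Fin 4) = 1 from rfl,
      show (Fin.castSucc (2:Fin 3) : Fin 4) = 2 from rfl,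
      show ((0:Fin 4):ℕ) = 0 from rfl, show ((1:Fin 4):ℕ) = 1 from rfl,
      show ((2:Fin 4):ℕ) = 2 from rfl, show ((3:Fin 4):ℕ) = 3 from rfl]
    norm_num
    try ring
  have a12 : G.adjugate 1 2 = -(G 0 0 * G 1 2 * G 3 3 - G 0 0 * G 1 3 * G 3 2 - G 0 2 * G 1 0 * G 3 3 + G 0 2 * G 1 3 * G 3 0 + G 0 3 * G 1 0 * G 3 2 - G 0 3 * G 1 2 * G 3 0) := by
    rw [Matrix.adjugate_fin_succ_eq_det_submatrix, Matrix.det_fin_three]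
    simp (config := { decide := true }) only [Fin.succAbove, Fin.lt_def,
      Matrix.submatrix_apply, if_true, if_false,
      show ((0:Fin 3).succ : Fin 4) = 1 from rfl,
      show ((1:Fin 3).succ : Fin 4) = 2 from rfl,
      show ((2:Fin 3).succ : Fin 4) = 3 from rfl,
      show (Fin.castSucc (0:Fin 3) : Fin 4) = 0 from rfl,
      show (Fin.castSucc (1:Fin 3) : Fin 4) = 1 from rfl,
      show (Fin.castSucc (2:Fin 3) : Fin 4) = 2 from rfl,
      show ((0:Fin 4):ℕ) = 0 from rfl, show ((1:Fin 4):ℕ) = 1 from rfl,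
      show ((2:Fin 4):ℕ) = 2 from rfl, show ((3:Fin 4):ℕ) = 3 from rfl]
    norm_num
    try ring
  have a13 : G.adjugate 1 3 = (G 0 0 * G 1 2 * G 2 3 - G 0 0 * G 1 3 * G 2 2 - G 0 2 * G 1 0 * G 2 3 + G 0 2 * G 1 3 * G 2 0 + G 0 3 * G 1 0 * G 2 2 - G 0 3 * G 1 2 * G 2 0) := by
    rw [Matrix.adjugate_fin_succ_eq_det_submatrix, Matrix.det_fin_three]
    simp (config := { decide := true }) only [Fin.succAbove, Fin.lt_def,
      Matrix.submatrix_apply, if_true, if_false,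
      show ((0:Fin 3).succ : Fin 4) = 1 from rfl,
      show ((1:Fin 3).succ : Fin 4) = 2 from rfl,
      show ((2:Fin 3).succ : Fin 4) = 3 from rfl,
      show (Fin.castSucc (0:Fin 3) : Fin 4) = 0 from rfl,
      show (Fin.castSucc (1:Fin 3) : Fin 4) = 1 from rfl,
      show (Fin.castSucc (2:Fin 3) : Fin 4) = 2 from rfl,
      show ((0:Fin 4):ℕ) = 0 from rfl, show ((1:Fin 4):ℕ) = 1 from rfl,
      show ((2:Fin 4):ℕ) = 2 from rfl, show ((3:Fin 4):ℕ) = 3 from rfl]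
    norm_num
    try ring
  have a20 : G.adjugate 2 0 = (G 1 0 * G 2 1 * G 3 3 - G 1 0 * G 2 3 * G 3 1 - G 1 1 * G 2 0 * G 3 3 + G 1 1 * G 2 3 * G 3 0 + G 1 3 * G 2 0 * G 3 1 - G 1 3 * G 2 1 * G 3 0) := by
    rw [Matrix.adjugate_fin_succ_eq_det_submatrix, Matrix.det_fin_three]
    simp (config := { decide := true }) only [Fin.succAbove, Fin.lt_def,
      Matrix.submatrix_apply, if_true, if_false,
      show ((0:Fin 3).succ : Fin 4) = 1 from rfl,
      show ((1:Fin 3).succ : Fin 4) = 2 from rfl,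
      show ((2:Fin 3).succ : Fin 4) = 3 from rfl,
      show (Fin.castSucc (0:Fin 3) : Fin 4) = 0 from rfl,
      show (Fin.castSucc (1:Fin 3) : Fin 4) = 1 from rfl,
      show (Fin.castSucc (2:Fin 3) : Fin 4) = 2 from rfl,
      show ((0:Fin 4):ℕ) = 0 from rfl, show ((1:Fin 4):ℕ) = 1 from rfl,
      show ((2:Fin 4):ℕ) = 2 from rfl, show ((3:Fin 4):ℕ) = 3 from rfl]
    norm_num
    try ring
  have a21 : G.adjugate 2 1 = -(G 0 0 * G 2 1 * G 3 3 - G 0 0 * G 2 3 * G 3 1 - G 0 1 * G 2 0 * G 3 3 + G 0 1 * G 2 3 * G 3 0 + G 0 3 * G 2 0 * G 3 1 - G 0 3 * G 2 1 * G 3 0) := by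
    rw [Matrix.adjugate_fin_succ_eq_det_submatrix, Matrix.det_fin_three]
    simp (config := { decide := true }) only [Fin.succAbove, Fin.lt_def,
      Matrix.submatrix_apply, if_true, if_false,
      show ((0:Fin 3).succ : Fin 4) = 1 from rfl,
      show ((1:Fin 3).succ : Fin 4) = 2 from rfl,
      show ((2:Fin 3).succ : Fin 4) = 3 from rfl,
      show (Fin.castSucc (0:Fin 3) : Fin 4) = 0 from rfl,
      show (Fin.castSucc (1:Fin 3) : Fin 4) = 1 from rfl,
      show (Fin.castSucc (2:Fin 3) : Fin 4) = 2 from rfl,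
      show ((0:Fin 4):ℕ) = 0 from rfl, show ((1:Fin 4):ℕ) = 1 from rfl,
      show ((2:Fin 4):ℕ) = 2 from rfl, show ((3:Fin 4):ℕ) = 3 from rfl]
    norm_num
    try ring
  have a22 : G.adjugate 2 2 = (G 0 0 * G 1 1 * G 3 3 - G 0 0 * G 1 3 * G 3 1 - G 0 1 * G 1 0 * G 3 3 + G 0 1 * G 1 3 * G 3 0 + G 0 3 * G 1 0 * G 3 1 - G 0 3 * G 1 1 * G 3 0) := by
    rw [Matrix.adjugate_fin_succ_eq_det_submatrix, Matrix.det_fin_three]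
    simp (config := { decide := true }) only [Fin.succAbove, Fin.lt_def,
      Matrix.submatrix_apply, if_true, if_false,
      show ((0:Fin 3).succ : Fin 4) = 1 from rfl,
      show ((1:Fin 3).succ : Fin 4) = 2 from rfl,
      show ((2:Fin 3).succ : Fin 4) = 3 from rfl,
      show (Fin.castSucc (0:Fin 3) : Fin 4) = 0 from rfl,
      show (Fin.castSucc (1:Fin 3) : Fin 4) = 1 from rfl,
      show (Fin.castSucc (2:Fin 3) : Fin 4) = 2 from rfl,
      show ((0:Fin 4):ℕ) = 0 from rfl, show ((1:Fin 4):ℕ) = 1 from rfl,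
      show ((2:Fin 4):ℕ) = 2 from rfl, show ((3:Fin 4):ℕ) = 3 from rfl]
    norm_num
    try ring
  have a23 : G.adjugate 2 3 = -(G 0 0 * G 1 1 * G 2 3 - G 0 0 * G 1 3 * G 2 1 - G 0 1 * G 1 0 * G 2 3 + G 0 1 * G 1 3 * G 2 0 + G 0 3 * G 1 0 * G 2 1 - G 0 3 * G 1 1 * G 2 0) := by
    rw [Matrix.adjugate_fin_succ_eq_det_submatrix, Matrix.det_fin_three]
    simp (config := { decide := true }) only [Fin.succAbove, Fin.lt_def,
      Matrix.submatrix_apply, if_true, if_false,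
      show ((0:Fin 3).succ : Fin 4) = 1 from rfl,
      show ((1:Fin 3).succ : Fin 4) = 2 from rfl,
      show ((2:Fin 3).succ : Fin 4) = 3 from rfl,
      show (Fin.castSucc (0:Fin 3) : Fin 4) = 0 from rfl,
      show (Fin.castSucc (1:Fin 3) : Fin 4) = 1 from rfl,
      show (Fin.castSucc (2:Fin 3) : Fin 4) = 2 from rfl,
      show ((0:Fin 4):ℕ) = 0 from rfl, show ((1:Fin 4):ℕ) = 1 from rfl,
      show ((2:Fin 4):ℕ) = 2 from rfl, show ((3:Fin 4):ℕ) = 3 from rfl]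
    norm_num
    try ring
  have a30 : G.adjugate 3 0 = -(G 1 0 * G 2 1 * G 3 2 - G 1 0 * G 2 2 * G 3 1 - G 1 1 * G 2 0 * G 3 2 + G 1 1 * G 2 2 * G 3 0 + G 1 2 * G 2 0 * G 3 1 - G 1 2 * G 2 1 * G 3 0) := by
    rw [Matrix.adjugate_fin_succ_eq_det_submatrix, Matrix.det_fin_three]
    simp (config := { decide := true }) only [Fin.succAbove, Fin.lt_def,
      Matrix.submatrix_apply, if_true, if_false,
      show ((0:Fin 3).succ : Fin 4) = 1 from rfl,
      show ((1:Fin 3).succ : Fin 4) = 2 from rfl,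
      show ((2:Fin 3).succ : Fin 4) = 3 from rfl,
      show (Fin.castSucc (0:Fin 3) : Fin 4) = 0 from rfl,
      show (Fin.castSucc (1:Fin 3) : Fin 4) = 1 from rfl,
      show (Fin.castSucc (2:Fin 3) : Fin 4) = 2 from rfl,
      show ((0:Fin 4):ℕ) = 0 from rfl, show ((1:Fin 4):ℕ) = 1 from rfl,
      show ((2:Fin 4):ℕ) = 2 from rfl, show ((3:Fin 4):ℕ) = 3 from rfl]
    norm_num
    try ring
  have a31 : G.adjugate 3 1 = (G 0 0 * G 2 1 * G 3 2 - G 0 0 * G 2 2 * G 3 1 - G 0 1 * G 2 0 * G 3 2 + G 0 1 * G 2 2 * G 3 0 + G 0 2 * G 2 0 * G 3 1 - G 0 2 * G 2 1 * G 3 0) := by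
    rw [Matrix.adjugate_fin_succ_eq_det_submatrix, Matrix.det_fin_three]
    simp (config := { decide := true }) only [Fin.succAbove, Fin.lt_def,
      Matrix.submatrix_apply, if_true, if_false,
      show ((0:Fin 3).succ : Fin 4) = 1 from rfl,
      show ((1:Fin 3).succ : Fin 4) = 2 from rfl,
      show ((2:Fin 3).succ : Fin 4) = 3 from rfl,
      show (Fin.castSucc (0:Fin 3) : Fin 4) = 0 from rfl,
      show (Fin.castSucc (1:Fin 3) : Fin 4) = 1 from rfl,
      show (Fin.castSucc (2:Fin 3) : Fin 4) = 2 from rfl,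
      show ((0:Fin 4):ℕ) = 0 from rfl, show ((1:Fin 4):ℕ) = 1 from rfl,
      show ((2:Fin 4):ℕ) = 2 from rfl, show ((3:Fin 4):ℕ) = 3 from rfl]
    norm_num
    try ring
  have a32 : G.adjugate 3 2 = -(G 0 0 * G 1 1 * G 3 2 - G 0 0 * G 1 2 * G 3 1 - G 0 1 * G 1 0 * G 3 2 + G 0 1 * G 1 2 * G 3 0 + G 0 2 * G 1 0 * G 3 1 - G 0 2 * G 1 1 * G 3 0) := by
    rw [Matrix.adjugate_fin_succ_eq_det_submatrix, Matrix.det_fin_three]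
    simp (config := { decide := true }) only [Fin.succAbove, Fin.lt_def,
      Matrix.submatrix_apply, if_true, if_false,
      show ((0:Fin 3).succ : Fin 4) = 1 from rfl,
      show ((1:Fin 3).succ : Fin 4) = 2 from rfl,
      show ((2:Fin 3).succ : Fin 4) = 3 from rfl,
      show (Fin.castSucc (0:Fin 3) : Fin 4) = 0 from rfl,
      show (Fin.castSucc (1:Fin 3) : Fin 4) = 1 from rfl,
      show (Fin.castSucc (2:Fin 3) : Fin 4) = 2 from rfl,
      show ((0:Fin 4):ℕ) = 0 from rfl, show ((1:Fin 4):ℕ) = 1 from rfl,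
      show ((2:Fin 4):ℕ) = 2 from rfl, show ((3:Fin 4):ℕ) = 3 from rfl]
    norm_num
    try ring
  have a33 : G.adjugate 3 3 = (G 0 0 * G 1 1 * G 2 2 - G 0 0 * G 1 2 * G 2 1 - G 0 1 * G 1 0 * G 2 2 + G 0 1 * G 1 2 * G 2 0 + G 0 2 * G 1 0 * G 2 1 - G 0 2 * G 1 1 * G 2 0) := by
    rw [Matrix.adjugate_fin_succ_eq_det_submatrix, Matrix.det_fin_three]
    simp (config := { decide := true }) only [Fin.succAbove, Fin.lt_def,
      Matrix.submatrix_apply, if_true, if_false,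
      show ((0:Fin 3).succ : Fin 4) = 1 from rfl,
      show ((1:Fin 3).succ : Fin 4) = 2 from rfl,
      show ((2:Fin 3).succ : Fin 4) = 3 from rfl,
      show (Fin.castSucc (0:Fin 3) : Fin 4) = 0 from rfl,
      show (Fin.castSucc (1:Fin 3) : Fin 4) = 1 from rfl,
      show (Fin.castSucc (2:Fin 3) : Fin 4) = 2 from rfl,
      show ((0:Fin 4):ℕ) = 0 from rfl, show ((1:Fin 4):ℕ) = 1 from rfl,
      show ((2:Fin 4):ℕ) = 2 from rfl, show ((3:Fin 4):ℕ) = 3 from rfl]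
    norm_num
    try ring
  -- the eps4-contraction invariant
  have hTval : (∑ μ, ∑ ν, F μ ν * ∑ ρ, ∑ σ, eps4 μ ν ρ σ * F ρ σ)
      = 8 * (F 0 1 * F 2 3 - F 0 2 * F 1 3 + F 0 3 * F 1 2) := by
    simp only [Fin.sum_univ_four]
    norm_num [eps4, f00, f11, f22, f33, f10, f20, f30, f21, f31, f32,
      show ((0:Fin 4):ℕ) = 0 from rfl, show ((1:Fin 4):ℕ) = 1 from rfl,
      show ((2:Fin 4):ℕ) = 2 from rfl, show ((3:Fin 4):ℕ) = 3 from rfl]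
    try ring
  -- Ftil invariant, square root eliminated
  have hS2 : (∑ μ, ∑ ν, F μ ν * Ftil μ ν)
      = (1 / (2 * Real.sqrt (-G.det))) *
        (∑ μ, ∑ ν, F μ ν * ∑ ρ, ∑ σ, eps4 μ ν ρ σ * F ρ σ) := by
    simp only [hFtil, Fin.sum_univ_four]
    ring
  have hS2sq : (∑ μ, ∑ ν, F μ ν * Ftil μ ν) ^ 2
      = (8 * (F 0 1 * F 2 3 - F 0 2 * F 1 3 + F 0 3 * F 1 2)) ^ 2
        / (4 * (-G.det)) := by
    rw [hS2, hTval, mul_pow, div_pow, one_pow, mul_pow, hs2]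
    ring
  -- Fup invariant through the adjugate
  have hS1 : (∑ μ, ∑ ν, F μ ν * Fup μ ν) = (G.det)⁻¹ * (G.det)⁻¹ *
      (∑ μ, ∑ ν, ∑ α, ∑ β, F μ ν * G.adjugate μ α * G.adjugate ν β * F α β) := by
    simp only [hFup, hinv, Fin.sum_univ_four]
    ring
  -- the polynomial core of the identity
  have key : G.det * (G + F).det =
      G.det * G.det
      + (1/2) * (∑ μ, ∑ ν, ∑ α, ∑ β,
          F μ ν * G.adjugate μ α * G.adjugate ν β * F α β)
      + G.det * (8 * (F 0 1 * F 2 3 - F 0 2 * F 1 3 + F 0 3 * F 1 2)) ^ 2 / 64 := by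
    simp only [Fin.sum_univ_four, det_fin_four', Matrix.add_apply,
      a00, a01, a02, a03, a10, a11, a12, a13,
      a20, a21, a22, a23, a30, a31, a32, a33,
      f00, f11, f22, f33, f10, f20, f30, f21, f31, f32,
      g10, g20, g30, g21, g31, g32]
    ring
  rw [hS1, hS2sq]
  apply mul_left_cancel₀ hd
  rw [key]
  field_simp
  ring
end

section
/- Let K : ℝ⁴ → Matrix (Fin 4) (Fin 4) ℝ be differentiable with K(x) invertible for every x, and let Γ : Fin 4 → Fin 4 → Fin 4 → (ℝ⁴ → ℝ) be connection-coefficient functions. Suppose the compatibility condition ∂_α K^μ_ν + ∑_ρ Γ^μ_{ρα} K^ρ_ν − ∑_ρ Γ^ρ_{να} K^μ_ρ = ∑_ρ K^μ_ρ (Γ^ρ_{αν} − Γ^ρ_{να}) holds at every point for all indices μ, ν, α. Then for every α and every point, ∂_α ln|det K| = ∑_ν (Γ^ν_{αν} − Γ^ν_{να}); in particular the trace of the torsion tensor T_α := ∑_ν (Γ^ν_{αν} − Γ^ν_{να}) is the gradient of the scalar field ln|det K|, and if K is twice continuously differentiable then ∂_β T_α = ∂_α T_β for all α, β. -/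
open Matrix

/-- The partial derivative of `f : ℝ⁴ → ℝ` in the `α`-th coordinate direction. -/
noncomputable def pd (α : Fin 4) (f : (Fin 4 → ℝ) → ℝ) (x : Fin 4 → ℝ) : ℝ :=
  fderiv ℝ f x (Pi.single α 1)

lemma detK_contDiff (K : (Fin 4 → ℝ) → Matrix (Fin 4) (Fin 4) ℝ)
    (h : ∀ μ ν, ContDiff ℝ 2 (fun x => K x μ ν)) :
    ContDiff ℝ 2 (fun y => (K y).det) := by
  have : (fun y => (K y).det)
      = fun y => ∑ σ : Equiv.Perm (Fin 4), ((Equiv.Perm.sign σ : ℤ) : ℝ) * ∏ j, K y (σ j) j := by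
    funext y; rw [Matrix.det_apply']
  rw [this]
  exact ContDiff.sum fun σ _ => contDiff_const.mul (contDiff_prod fun j _ => h (σ j) j)

lemma det_updateColumn_perm (A : Matrix (Fin 4) (Fin 4) ℝ) (i : Fin 4) (b : Fin 4 → ℝ) :
    (A.updateCol i b).det
      = ∑ σ : Equiv.Perm (Fin 4), ((Equiv.Perm.sign σ : ℤ) : ℝ)
          * (b (σ i) * ∏ j ∈ Finset.univ.erase i, A (σ j) j) := by
  rw [Matrix.det_apply']
  refine Finset.sum_congr rfl fun σ _ => ?_
  congr 1
  rw [← Finset.mul_prod_erase Finset.univ _ (Finset.mem_univ i)]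
  congr 1
  · simp [Matrix.updateCol_apply]
  · exact Finset.prod_congr rfl fun j hj => by
      simp [Matrix.updateCol_apply, Finset.ne_of_mem_erase hj]

lemma hasFDerivAt_detK (K : (Fin 4 → ℝ) → Matrix (Fin 4) (Fin 4) ℝ)
    (hdiff : ∀ μ ν, Differentiable ℝ (fun x => K x μ ν)) (x : Fin 4 → ℝ) :
    HasFDerivAt (fun y => (K y).det)
      (∑ i, ∑ k, (K x).adjugate i k • fderiv ℝ (fun y => K y k i) x) x := by
  have hbase : HasFDerivAt
      (fun y => ∑ σ : Equiv.Perm (Fin 4), ((Equiv.Perm.sign σ : ℤ) : ℝ) * ∏ j, K y (σ j) j)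
      (∑ σ : Equiv.Perm (Fin 4), ((Equiv.Perm.sign σ : ℤ) : ℝ) •
        ∑ j, (∏ l ∈ Finset.univ.erase j, K x (σ l) l) • fderiv ℝ (fun y => K y (σ j) j) x) x := by
    refine HasFDerivAt.fun_sum fun σ _ => ?_
    refine HasFDerivAt.const_mul ?_ _
    exact HasFDerivAt.finset_prod fun j _ => ((hdiff (σ j) j) x).hasFDerivAt
  have heq : (fun y => (K y).det)
      = fun y => ∑ σ : Equiv.Perm (Fin 4), ((Equiv.Perm.sign σ : ℤ) : ℝ) * ∏ j, K y (σ j) j := by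
    funext y; rw [Matrix.det_apply']
  rw [heq]
  convert hbase using 1
  ext v
  simp only [ContinuousLinearMap.sum_apply, ContinuousLinearMap.smul_apply, smul_eq_mul]
  have key : ∀ (b : Fin 4 → ℝ) (i : Fin 4),
      (∑ σ : Equiv.Perm (Fin 4), ((Equiv.Perm.sign σ : ℤ) : ℝ)
          * ((∏ l ∈ Finset.univ.erase i, K x (σ l) l) * b (σ i)))
        = ∑ k, (K x).adjugate i k * b k := by
    intro b i
    have h1 : (∑ σ : Equiv.Perm (Fin 4), ((Equiv.Perm.sign σ : ℤ) : ℝ)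
          * ((∏ l ∈ Finset.univ.erase i, K x (σ l) l) * b (σ i)))
        = ((K x).updateCol i b).det := by
      rw [det_updateColumn_perm]
      exact Finset.sum_congr rfl fun σ _ => by ring
    rw [h1, ← Matrix.cramer_apply, Matrix.cramer_eq_adjugate_mulVec]
    simp [Matrix.mulVec, dotProduct]
  calc ∑ i : Fin 4, ∑ k : Fin 4, (K x).adjugate i k * (fderiv ℝ (fun y => K y k i) x) v
      = ∑ i : Fin 4, ∑ σ : Equiv.Perm (Fin 4), ((Equiv.Perm.sign σ : ℤ) : ℝ)
          * ((∏ l ∈ Finset.univ.erase i, K x (σ l) l) * (fderiv ℝ (fun y => K y (σ i) i) x) v) := by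
        exact Finset.sum_congr rfl fun i _ => (key (fun k => (fderiv ℝ (fun y => K y k i) x) v) i).symm
    _ = ∑ σ : Equiv.Perm (Fin 4), ∑ i : Fin 4, ((Equiv.Perm.sign σ : ℤ) : ℝ)
          * ((∏ l ∈ Finset.univ.erase i, K x (σ l) l) * (fderiv ℝ (fun y => K y (σ i) i) x) v) :=
        Finset.sum_comm
    _ = ∑ σ : Equiv.Perm (Fin 4), ((Equiv.Perm.sign σ : ℤ) : ℝ)
          * ∑ i : Fin 4, (∏ l ∈ Finset.univ.erase i, K x (σ l) l) * (fderiv ℝ (fun y => K y (σ i) i) x) v := by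
        exact Finset.sum_congr rfl fun σ _ => (Finset.mul_sum _ _ _).symm

lemma pd_log_det (K : (Fin 4 → ℝ) → Matrix (Fin 4) (Fin 4) ℝ)
    (hdiff : ∀ μ ν, Differentiable ℝ (fun x => K x μ ν))
    (hinv : ∀ x, IsUnit (K x).det) (α : Fin 4) (x : Fin 4 → ℝ) :
    pd α (fun y => Real.log |(K y).det|) x
      = ∑ i, ∑ k, (K x)⁻¹ i k * pd α (fun y => K y k i) x := by
  have hd0 : (K x).det ≠ 0 := (hinv x).ne_zero
  have hdet := hasFDerivAt_detK K hdiff x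
  have habs : (fun y => Real.log |(K y).det|) = fun y => Real.log ((K y).det) :=
    funext fun y => Real.log_abs _
  have hlog : HasFDerivAt (fun y => Real.log ((K y).det))
      (((K x).det)⁻¹ • ∑ i : Fin 4, ∑ k : Fin 4, (K x).adjugate i k • fderiv ℝ (fun y => K y k i) x) x :=
    by have := (Real.hasDerivAt_log hd0).comp_hasFDerivAt x hdet; exact this
  rw [pd, habs, hlog.fderiv]
  simp only [ContinuousLinearMap.smul_apply, ContinuousLinearMap.sum_apply, smul_eq_mul,
    Matrix.inv_def, Ring.inverse_eq_inv', Matrix.smul_apply, pd, Finset.mul_sum]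
  exact Finset.sum_congr rfl fun i _ => Finset.sum_congr rfl fun k _ => by ring

/-- Equations (4), (6), (8), (10) of the paper: the generalized compatibility
condition `∇K = KT` (with torsion `T^ρ_{να} = Γ^ρ_{αν} − Γ^ρ_{να}`), for an
everywhere-invertible differentiable fundamental tensor `K`, forces
`∂_α ln|det K| = ∑_ν (Γ^ν_{αν} − Γ^ν_{να})`; in particular the torsion trace
`T_α` is the gradient of the scalar `ln|det K|`, and if `K` is `C²` then the
1-form `T_α` is closed: `∂_β T_α = ∂_α T_β`. -/
theorem torsion_trace_is_gradient
    (K : (Fin 4 → ℝ) → Matrix (Fin 4) (Fin 4) ℝ)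
    (Γ : Fin 4 → Fin 4 → Fin 4 → (Fin 4 → ℝ) → ℝ)
    (hdiff : ∀ μ ν, Differentiable ℝ (fun x => K x μ ν))
    (hinv : ∀ x, IsUnit (K x).det)
    (hcomp : ∀ x (μ ν α : Fin 4),
      pd α (fun y => K y μ ν) x
        + (∑ ρ, Γ μ ρ α x * K x ρ ν) - (∑ ρ, Γ ρ ν α x * K x μ ρ)
      = ∑ ρ, K x μ ρ * (Γ ρ α ν x - Γ ρ ν α x)) :
    (∀ (α : Fin 4) (x : Fin 4 → ℝ),
      pd α (fun y => Real.log |(K y).det|) x = ∑ ν, (Γ ν α ν x - Γ ν ν α x)) ∧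
    ((∀ μ ν, ContDiff ℝ 2 (fun x => K x μ ν)) →
      ∀ (α β : Fin 4) (x : Fin 4 → ℝ),
        pd β (fun y => ∑ ν, (Γ ν α ν y - Γ ν ν α y)) x
          = pd α (fun y => ∑ ν, (Γ ν β ν y - Γ ν ν β y)) x) := by
  have part1 : ∀ (α : Fin 4) (x : Fin 4 → ℝ),
      pd α (fun y => Real.log |(K y).det|) x = ∑ ν, (Γ ν α ν x - Γ ν ν α x) := by
    intro α x
    have hA1 : (K x)⁻¹ * (K x) = 1 := Matrix.nonsing_inv_mul _ (hinv x)
    have hA2 : (K x) * (K x)⁻¹ = 1 := Matrix.mul_nonsing_inv _ (hinv x)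
    have hDeq : Matrix.of (fun μ ν => pd α (fun y => K y μ ν) x)
        = K x * Matrix.of (fun ρ ν => Γ ρ α ν x - Γ ρ ν α x)
          - Matrix.of (fun μ ρ => Γ μ ρ α x) * K x
          + K x * Matrix.of (fun μ ρ => Γ μ ρ α x) := by
      ext μ ν
      simp only [Matrix.add_apply, Matrix.sub_apply, Matrix.mul_apply, Matrix.of_apply]
      have h := hcomp x μ ν α
      rw [show (∑ ρ, Γ ρ ν α x * K x μ ρ) = ∑ ρ, K x μ ρ * Γ ρ ν α x from
        Finset.sum_congr rfl fun ρ _ => mul_comm _ _] at h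
      linarith
    rw [pd_log_det K hdiff hinv α x]
    have htr : ∑ i, ∑ k, (K x)⁻¹ i k * pd α (fun y => K y k i) x
        = ((K x)⁻¹ * Matrix.of (fun μ ν => pd α (fun y => K y μ ν) x)).trace := by
      simp [Matrix.trace, Matrix.mul_apply, Matrix.diag]
    rw [htr, hDeq, Matrix.mul_add, Matrix.mul_sub, Matrix.trace_add, Matrix.trace_sub,
      ← Matrix.mul_assoc, ← Matrix.mul_assoc, hA1, Matrix.one_mul,
      Matrix.trace_mul_comm ((K x)⁻¹ * Matrix.of (fun μ ρ => Γ μ ρ α x)) (K x),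
      ← Matrix.mul_assoc, hA2, Matrix.one_mul, ← Matrix.mul_assoc, hA1, Matrix.one_mul]
    rw [show ∀ a b : ℝ, a - b + b = a from fun a b => by ring]
    simp [Matrix.trace, Matrix.diag]
  refine ⟨part1, fun hC2 α β x => ?_⟩
  -- Part 2
  set f : (Fin 4 → ℝ) → ℝ := fun y => Real.log |(K y).det| with hf
  have hfC2 : ContDiff ℝ 2 f := by
    rw [contDiff_iff_contDiffAt]
    intro y
    have habs : f = fun y => Real.log ((K y).det) := funext fun y => Real.log_abs _
    rw [habs]
    exact (Real.contDiffAt_log.2 (hinv y).ne_zero).comp y ((detK_contDiff K hC2).contDiffAt)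
  have hTα : (fun y => ∑ ν, (Γ ν α ν y - Γ ν ν α y)) = fun y => fderiv ℝ f y (Pi.single α 1) :=
    funext fun y => (part1 α y).symm
  have hTβ : (fun y => ∑ ν, (Γ ν β ν y - Γ ν ν β y)) = fun y => fderiv ℝ f y (Pi.single β 1) :=
    funext fun y => (part1 β y).symm
  have hF1 : ContDiff ℝ 1 (fderiv ℝ f) := hfC2.fderiv_right (by norm_num)
  have hdF : HasFDerivAt (fderiv ℝ f) (fderiv ℝ (fderiv ℝ f) x) x :=
    ((hF1.differentiable one_ne_zero) x).hasFDerivAt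
  have happ : ∀ v : Fin 4 → ℝ, HasFDerivAt (fun y => fderiv ℝ f y v)
      ((ContinuousLinearMap.apply ℝ ℝ v).comp (fderiv ℝ (fderiv ℝ f) x)) x :=
    fun v => (ContinuousLinearMap.apply ℝ ℝ v).hasFDerivAt.comp x hdF
  have hsym := second_derivative_symmetric
    (fun y => ((hfC2.differentiable (by norm_num)) y).hasFDerivAt) hdF
  rw [hTα, hTβ, pd, pd, (happ _).fderiv, (happ _).fderiv]
  simp only [ContinuousLinearMap.comp_apply, ContinuousLinearMap.apply_apply]
  exact hsym _ _
end

section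
/- Let h, E, B, j ∈ ℝ³ with h·B ≠ 0, and suppose (h·B) E = (E·B) h − j × B. Then h × E = −j + ((h·j)/(h·B)) B. -/
open Matrix

/-- Elimination of the electric field from the generalized Lorentz-force
relation (eqs. (82), (84)–(85)): if `h·B ≠ 0` and
`(h·B) E = (E·B) h − j × B`, then `h × E = −j + ((h·j)/(h·B)) B`. -/
theorem electric_field_elimination
    (h E B j : Fin 3 → ℝ) (hhB : h ⬝ᵥ B ≠ 0)
    (hforce : (h ⬝ᵥ B) • E = (E ⬝ᵥ B) • h - j ⨯₃ B) :
    h ⨯₃ E = -j + ((h ⬝ᵥ j) / (h ⬝ᵥ B)) • B := by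
  have h0 := congrFun hforce 0
  have h1 := congrFun hforce 1
  have h2 := congrFun hforce 2
  have hd : h 0 * B 0 + h 1 * B 1 + h 2 * B 2 ≠ 0 := by
    simpa [dotProduct, Fin.sum_univ_three] using hhB
  simp [crossProduct, dotProduct, Fin.sum_univ_three] at h0 h1 h2
  funext i
  fin_cases i <;>
    simp [crossProduct, dotProduct, Fin.sum_univ_three] <;>
    field_simp
  · linear_combination h 1 * h2 - h 2 * h1
  · linear_combination h 2 * h0 - h 0 * h2
  · linear_combination h 0 * h1 - h 1 * h0
end

section
/- Let E, B : ℝ × ℝ³ → ℝ³ be twice continuously differentiable time-dependent vector fields and h⁰ ∈ ℝ a constant, and suppose at every point: div B = 0, ∂_t B = −curl E, and ∂_t E − curl B = h⁰ B (spatial divergence and curl taken at fixed time, with div F = ∑_i ∂_i F_i and (curl F)_i = ∑_{j,k} ε_{ijk} ∂_j F_k). Then at every point ∂²_t B − ΔB + h⁰ (curl B) = 0, where Δ is the spatial vector Laplacian applied componentwise. -/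
open Matrix

/-- The 3-dimensional Levi-Civita symbol with `ε₀₁₂ = 1`. -/
noncomputable def eps3 (i j k : Fin 3) : ℝ :=
  (((j : ℝ) - i) * ((k : ℝ) - i) * ((k : ℝ) - j)) / 2

/-- Time derivative of `f : ℝ × ℝ³ → ℝ` (derivative in the direction `(1,0)`). -/
noncomputable def pdT (f : ℝ × (Fin 3 → ℝ) → ℝ) (p : ℝ × (Fin 3 → ℝ)) : ℝ :=
  fderiv ℝ f p (1, 0)

/-- Spatial partial derivative of `f : ℝ × ℝ³ → ℝ` in the `j`-th direction. -/
noncomputable def pdX (j : Fin 3) (f : ℝ × (Fin 3 → ℝ) → ℝ)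
    (p : ℝ × (Fin 3 → ℝ)) : ℝ :=
  fderiv ℝ f p (0, Pi.single j 1)

/-- Spatial divergence of a time-dependent vector field on ℝ³. -/
noncomputable def divX (F : ℝ × (Fin 3 → ℝ) → (Fin 3 → ℝ))
    (p : ℝ × (Fin 3 → ℝ)) : ℝ :=
  ∑ i, pdX i (fun q => F q i) p

/-- Spatial curl of a time-dependent vector field on ℝ³. -/
noncomputable def curlX (F : ℝ × (Fin 3 → ℝ) → (Fin 3 → ℝ))
    (p : ℝ × (Fin 3 → ℝ)) (i : Fin 3) : ℝ :=
  ∑ j, ∑ k, eps3 i j k * pdX j (fun q => F q k) p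

/-- Spatial componentwise vector Laplacian of a time-dependent vector field. -/
noncomputable def lapX (F : ℝ × (Fin 3 → ℝ) → (Fin 3 → ℝ))
    (p : ℝ × (Fin 3 → ℝ)) (i : Fin 3) : ℝ :=
  ∑ j, pdX j (fun q => pdX j (fun r => F r i) q) p

/- ### Auxiliary machinery -/

/-- Directional derivative in direction `v`. -/
noncomputable def pdD (v : ℝ × (Fin 3 → ℝ)) (f : ℝ × (Fin 3 → ℝ) → ℝ)
    (p : ℝ × (Fin 3 → ℝ)) : ℝ := fderiv ℝ f p v

/-- Time direction. -/
noncomputable def dirT : ℝ × (Fin 3 → ℝ) := (1, 0)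

/-- Spatial direction `j`. -/
noncomputable def dirX (j : Fin 3) : ℝ × (Fin 3 → ℝ) := (0, Pi.single j 1)

lemma contDiff_pdD {f : ℝ × (Fin 3 → ℝ) → ℝ} (hf : ContDiff ℝ 2 f)
    (v : ℝ × (Fin 3 → ℝ)) : ContDiff ℝ 1 (pdD v f) := by
  have h1 : ContDiff ℝ 1 (fderiv ℝ f) := hf.fderiv_right (by norm_num)
  exact (ContinuousLinearMap.apply ℝ ℝ v).contDiff.comp h1

lemma diff_pdD {f : ℝ × (Fin 3 → ℝ) → ℝ} (hf : ContDiff ℝ 2 f)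
    (v : ℝ × (Fin 3 → ℝ)) : Differentiable ℝ (pdD v f) :=
  (contDiff_pdD hf v).differentiable (by norm_num)

lemma pdD_swap {f : ℝ × (Fin 3 → ℝ) → ℝ} (hf : ContDiff ℝ 2 f)
    (v w p : ℝ × (Fin 3 → ℝ)) : pdD v (pdD w f) p = pdD w (pdD v f) p := by
  have hd : DifferentiableAt ℝ (fderiv ℝ f) p :=
    ((hf.fderiv_right (m := 1) (by norm_num)).differentiable (by norm_num)) p
  have key : ∀ u : ℝ × (Fin 3 → ℝ), fderiv ℝ (pdD u f) p
      = (ContinuousLinearMap.apply ℝ ℝ u).comp (fderiv ℝ (fderiv ℝ f) p) := by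
    intro u
    have h : pdD u f = (ContinuousLinearMap.apply ℝ ℝ u) ∘ (fderiv ℝ f) := rfl
    rw [h, fderiv_comp p (ContinuousLinearMap.differentiableAt _) hd,
      ContinuousLinearMap.fderiv]
  have hsym : IsSymmSndFDerivAt ℝ f p := (hf.contDiffAt).isSymmSndFDerivAt (by simp [minSmoothness_of_isRCLikeNormedField])
  show fderiv ℝ (pdD w f) p v = fderiv ℝ (pdD v f) p w
  rw [key w, key v]
  simpa using hsym v w

lemma pdD_neg (v : ℝ × (Fin 3 → ℝ)) (f : ℝ × (Fin 3 → ℝ) → ℝ)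
    (p : ℝ × (Fin 3 → ℝ)) : pdD v (fun q => -(f q)) p = -(pdD v f p) := by
  unfold pdD; rw [fderiv_fun_neg]; simp

lemma pdD_zero (v p : ℝ × (Fin 3 → ℝ)) : pdD v (fun _ => (0:ℝ)) p = 0 := by
  unfold pdD; rw [fderiv_fun_const]; simp

lemma pdD_add {f g : ℝ × (Fin 3 → ℝ) → ℝ} {p : ℝ × (Fin 3 → ℝ)}
    (hf : DifferentiableAt ℝ f p) (hg : DifferentiableAt ℝ g p)
    (v : ℝ × (Fin 3 → ℝ)) :
    pdD v (fun q => f q + g q) p = pdD v f p + pdD v g p := by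
  unfold pdD; rw [fderiv_fun_add hf hg]; simp

lemma pdD_const_mul {f : ℝ × (Fin 3 → ℝ) → ℝ} {p : ℝ × (Fin 3 → ℝ)}
    (hf : DifferentiableAt ℝ f p) (c : ℝ) (v : ℝ × (Fin 3 → ℝ)) :
    pdD v (fun q => c * f q) p = c * pdD v f p := by
  unfold pdD; rw [fderiv_const_mul hf c]; simp

lemma pdD_sum {g : Fin 3 → ℝ × (Fin 3 → ℝ) → ℝ} {p : ℝ × (Fin 3 → ℝ)}
    (h : ∀ j, DifferentiableAt ℝ (g j) p) (v : ℝ × (Fin 3 → ℝ)) :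
    pdD v (fun q => ∑ j, g j q) p = ∑ j, pdD v (g j) p := by
  unfold pdD; rw [fderiv_fun_sum (fun j _ => h j)]; simp

lemma diff_curl {F : ℝ × (Fin 3 → ℝ) → (Fin 3 → ℝ)}
    (hF : ∀ i, ContDiff ℝ 2 (fun p => F p i)) (k : Fin 3) :
    Differentiable ℝ (fun q => curlX F q k) := by
  have h : (fun q => curlX F q k)
      = fun q => ∑ j, ∑ l, eps3 k j l * pdD (dirX j) (fun r => F r l) q := rfl
  rw [h]
  exact Differentiable.fun_sum fun j _ => Differentiable.fun_sum fun l _ =>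
    (diff_pdD (hF l) (dirX j)).const_mul _

lemma eps_curl_curl (S : Fin 3 → Fin 3 → Fin 3 → ℝ)
    (hsym : ∀ j l m, S j l m = S l j m)
    (hdiv : ∀ j, S j 0 0 + S j 1 1 + S j 2 2 = 0) (i : Fin 3) :
    ∑ j, ∑ k, eps3 i j k * (∑ l, ∑ m, eps3 k l m * S j l m) = -(∑ j, S j j i) := by
  fin_cases i
  · norm_num [eps3, Fin.sum_univ_three, show (⟨0, by norm_num⟩ : Fin 3) = 0 from rfl,
      show (⟨1, by norm_num⟩ : Fin 3) = 1 from rfl, show (⟨2, by norm_num⟩ : Fin 3) = 2 from rfl]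
    linear_combination hdiv 0 + hsym 1 0 1 + hsym 2 0 2
  · norm_num [eps3, Fin.sum_univ_three, show (⟨0, by norm_num⟩ : Fin 3) = 0 from rfl,
      show (⟨1, by norm_num⟩ : Fin 3) = 1 from rfl, show (⟨2, by norm_num⟩ : Fin 3) = 2 from rfl]
    linear_combination hdiv 1 + hsym 2 1 2 + hsym 0 1 0
  · norm_num [eps3, Fin.sum_univ_three, show (⟨0, by norm_num⟩ : Fin 3) = 0 from rfl,
      show (⟨1, by norm_num⟩ : Fin 3) = 1 from rfl, show (⟨2, by norm_num⟩ : Fin 3) = 2 from rfl]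
    linear_combination hdiv 2 + hsym 0 2 0 + hsym 1 2 1

/-- The chiral wave equation for the magnetic field: if `div B = 0`,
`∂_t B = −curl E` and `∂_t E − curl B = h⁰ B` for a constant `h⁰`, then
`∂²_t B − ΔB + h⁰ (curl B) = 0`. -/
theorem chiral_magnetic_wave_equation
    (E B : ℝ × (Fin 3 → ℝ) → (Fin 3 → ℝ)) (h0 : ℝ)
    (hE : ∀ i, ContDiff ℝ 2 (fun p => E p i))
    (hB : ∀ i, ContDiff ℝ 2 (fun p => B p i))
    (hdivB : ∀ p, divX B p = 0)
    (hfaraday : ∀ p i, pdT (fun q => B q i) p = -curlX E p i)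
    (hampere : ∀ p i, pdT (fun q => E q i) p - curlX B p i = h0 * B p i) :
    ∀ p i, pdT (fun q => pdT (fun r => B r i) q) p - lapX B p i
      + h0 * curlX B p i = 0 := by
  intro p i
  have hEd : ∀ k v, Differentiable ℝ (pdD v (fun q => E q k)) :=
    fun k v => diff_pdD (hE k) v
  have hBd : ∀ k v, Differentiable ℝ (pdD v (fun q => B q k)) :=
    fun k v => diff_pdD (hB k) v
  set S : Fin 3 → Fin 3 → Fin 3 → ℝ :=
    fun j l m => pdD (dirX j) (pdD (dirX l) (fun r => B r m)) p with hS
  have hSsym : ∀ j l m, S j l m = S l j m :=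
    fun j l m => pdD_swap (hB m) (dirX j) (dirX l) p
  have hdiv3 : ∀ j, S j 0 0 + S j 1 1 + S j 2 2 = 0 := by
    intro j
    have h0' : pdD (dirX j) (fun q => divX B q) p = 0 := by
      have he : (fun q => divX B q) = fun _ => (0:ℝ) := funext hdivB
      rw [he]; exact pdD_zero _ _
    have h1 : pdD (dirX j) (fun q => divX B q) p = ∑ l, S j l l := by
      show pdD (dirX j) (fun q => ∑ l, pdD (dirX l) (fun r => B r l) q) p = _
      rw [pdD_sum (fun l => (hBd l (dirX l)) p)]
    have h2 : (∑ l, S j l l) = 0 := h1.symm.trans h0'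
    simpa [Fin.sum_univ_three] using h2
  -- step 1: second time derivative of B through Faraday
  have s1 : pdT (fun q => pdT (fun r => B r i) q) p
      = -(pdD dirT (fun q => curlX E q i) p) := by
    have hf : (fun q => pdT (fun r => B r i) q) = fun q => -(curlX E q i) :=
      funext fun q => hfaraday q i
    show pdD dirT (fun q => pdT (fun r => B r i) q) p = _
    rw [hf]; exact pdD_neg _ _ _
  -- step 2: differentiate the curl of E termwise
  have s2 : pdD dirT (fun q => curlX E q i) p
      = ∑ j, ∑ k, eps3 i j k * pdD dirT (pdD (dirX j) (fun r => E r k)) p := by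
    have hc : (fun q => curlX E q i)
        = fun q => ∑ j, ∑ k, eps3 i j k * pdD (dirX j) (fun r => E r k) q := rfl
    rw [hc, pdD_sum (fun j => DifferentiableAt.fun_sum
      fun k _ => ((hEd k (dirX j)) p).const_mul _) dirT]
    refine Finset.sum_congr rfl fun j _ => ?_
    rw [pdD_sum (fun k => ((hEd k (dirX j)) p).const_mul _) dirT]
    exact Finset.sum_congr rfl fun k _ => pdD_const_mul ((hEd k (dirX j)) p) _ _
  -- step 3: swap derivatives and use Ampère's law
  have s3 : ∀ j k, pdD dirT (pdD (dirX j) (fun r => E r k)) p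
      = pdD (dirX j) (fun q => h0 * B q k + curlX B q k) p := by
    intro j k
    rw [pdD_swap (hE k) dirT (dirX j) p]
    have hfun : pdD dirT (fun r => E r k) = fun q => h0 * B q k + curlX B q k := by
      funext q
      have h := hampere q k
      show pdT (fun r => E r k) q = _
      linarith
    rw [hfun]
  -- step 4: split the spatial derivative
  have s4 : ∀ j k, pdD (dirX j) (fun q => h0 * B q k + curlX B q k) p
      = h0 * pdD (dirX j) (fun r => B r k) p
        + pdD (dirX j) (fun q => curlX B q k) p := by
    intro j k
    rw [pdD_add (DifferentiableAt.const_mul ((hB k).differentiable (by norm_num) p) h0)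
      ((diff_curl hB k) p) (dirX j),
      pdD_const_mul ((hB k).differentiable (by norm_num) p) h0 (dirX j)]
  have step : pdT (fun q => pdT (fun r => B r i) q) p
      = -(∑ j, ∑ k, eps3 i j k * (h0 * pdD (dirX j) (fun r => B r k) p
          + pdD (dirX j) (fun q => curlX B q k) p)) := by
    rw [s1, s2]
    congr 1
    exact Finset.sum_congr rfl fun j _ => Finset.sum_congr rfl fun k _ => by
      rw [s3 j k, s4 j k]
  -- curl of curl of B
  have expand : ∀ j k, pdD (dirX j) (fun q => curlX B q k) p
      = ∑ l, ∑ m, eps3 k l m * S j l m := by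
    intro j k
    have hc : (fun q => curlX B q k)
        = fun q => ∑ l, ∑ m, eps3 k l m * pdD (dirX l) (fun r => B r m) q := rfl
    rw [hc, pdD_sum (fun l => DifferentiableAt.fun_sum
      fun m _ => ((hBd m (dirX l)) p).const_mul _) (dirX j)]
    refine Finset.sum_congr rfl fun l _ => ?_
    rw [pdD_sum (fun m => ((hBd m (dirX l)) p).const_mul _) (dirX j)]
    exact Finset.sum_congr rfl fun m _ => pdD_const_mul ((hBd m (dirX l)) p) _ _
  have hT : (∑ j, ∑ k, eps3 i j k * pdD (dirX j) (fun q => curlX B q k) p)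
      = -(∑ j, S j j i) := by
    have h1 : (∑ j, ∑ k, eps3 i j k * pdD (dirX j) (fun q => curlX B q k) p)
        = ∑ j, ∑ k, eps3 i j k * (∑ l, ∑ m, eps3 k l m * S j l m) :=
      Finset.sum_congr rfl fun j _ => Finset.sum_congr rfl fun k _ => by
        rw [expand j k]
    rw [h1]; exact eps_curl_curl S hSsym hdiv3 i
  have hsplit : (∑ j, ∑ k, eps3 i j k * (h0 * pdD (dirX j) (fun r => B r k) p
        + pdD (dirX j) (fun q => curlX B q k) p))
      = h0 * (∑ j, ∑ k, eps3 i j k * pdD (dirX j) (fun r => B r k) p)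
        + ∑ j, ∑ k, eps3 i j k * pdD (dirX j) (fun q => curlX B q k) p := by
    simp only [Fin.sum_univ_three]; ring
  have hc : curlX B p i = ∑ j, ∑ k, eps3 i j k * pdD (dirX j) (fun r => B r k) p := rfl
  have hl : lapX B p i = ∑ j, S j j i := rfl
  rw [step, hsplit, hT, hc, hl]
  ring
end
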